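/- For all n ≥ 1, the determinant of the n!×n! matrix with rows and columns indexed by S_n and entries q^{maj(u v^{-1})} equals ∏_{k=2}^{n} (1 − q^k)^{n!·(k−1)/k}. -/

import Mathlib

/-- The major index: the sum of positions `i ∈ {1,…,n-1}` (1-indexed) where
`w(i) > w(i+1)`. -/
def pmaj {n : ℕ} (w : Equiv.Perm (Fin n)) : ℕ :=
  ∑ i : Fin n, if h : i.1 + 1 < n then
    (if w ⟨i.1 + 1, h⟩ < w i then i.1 + 1 else 0) else 0

open Equiv Matrix Polynomial Finset
open Fin.NatCast Fin.CommRing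

namespace S10
def pterm {m : ℕ} (w : Perm (Fin m)) (i : ℕ) : ℕ :=
  if h : i + 1 < m then (if w ⟨i+1, h⟩ < w ⟨i, Nat.lt_of_succ_lt h⟩ then i+1 else 0) else 0
lemma pmaj_eq {m : ℕ} (w : Perm (Fin m)) : pmaj w = ∑ i ∈ Finset.range (m-1), pterm w i := by
  have h0 : pmaj w = ∑ i : Fin m, pterm w i.1 := rfl
  rw [h0, Fin.sum_univ_eq_sum_range (fun i => pterm w i) m]
  cases m with
  | zero => simp
  | succ k => rw [Finset.sum_range_succ]; simp [pterm]

lemma pmaj_one {m : ℕ} : pmaj (1 : Perm (Fin m)) = 0 := by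
  rw [pmaj_eq]
  refine Finset.sum_eq_zero fun i hi => ?_
  simp only [Finset.mem_range] at hi
  have : i + 1 < m := by omega
  simp [pterm, this, Fin.lt_def]

variable {n : ℕ}
lemma cpow_apply (a : ℕ) (x : Fin (n+1)) : ((finRotate (n+1))^a) x = x + (a : Fin (n+1)) := by
  induction a generalizing x with
  | zero => simp
  | succ k ih =>
    rw [pow_succ, Equiv.Perm.mul_apply, finRotate_succ_apply, ih]
    push_cast; ring

lemma ind_sum (t M : ℕ) (h : t ≤ M) :
    ∑ i ∈ Finset.range M, (if t ≤ i then 1 else 0) = M - t := by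
  induction M with
  | zero => simp
  | succ k ih =>
    rw [Finset.sum_range_succ]
    rcases Nat.lt_or_ge k t with hk | hk
    · have : t = k + 1 := by omega
      subst this
      simp only [if_neg (by omega : ¬ (k+1 ≤ k))]
      rw [Finset.sum_eq_zero fun i hi => ?_] <;> simp_all; omega
    · rw [ih hk, if_pos hk]; omega

lemma key_pmaj (j : ℕ) (hj1 : 1 ≤ j) (hjn : j ≤ n) (h : Perm (Fin (n+1)))
    (hlast : h (Fin.last n) = Fin.last n) :
    pmaj ((finRotate (n+1))^j * h) = (n + 1 - j) + pmaj h := by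
  set c := finRotate (n+1) with hc
  set f : ℕ → ℕ := fun i => if hi : i < n+1 then
      (if n+1-j ≤ ((h ⟨i,hi⟩ : Fin (n+1)) : ℕ) then 1 else 0) else 0 with hf
  have hmod : ∀ y : Fin (n+1), (((c^j) y : Fin (n+1)) : ℕ) = ((y:ℕ) + j) % (n+1) := by
    intro y
    rw [cpow_apply]
    simp [Fin.val_add, Fin.val_natCast, Nat.add_mod]
  have hwrap : ∀ a : ℕ, a < n+1 → (a + j) % (n+1) = if n+1-j ≤ a then a + j - (n+1) else a + j := by
    intro a ha
    split_ifs with hcond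
    · rw [Nat.mod_eq_sub_mod (by omega), Nat.mod_eq_of_lt (by omega)]
    · exact Nat.mod_eq_of_lt (by omega)
  have hpt : ∀ i ∈ Finset.range n,
      pterm (c^j * h) i + (i+1) * f i = pterm h i + (i+1) * f (i+1) := by
    intro i hi
    simp only [Finset.mem_range] at hi
    have h1 : i + 1 < n + 1 := by omega
    have h0 : i < n + 1 := by omega
    have hab : h ⟨i+1, h1⟩ ≠ h ⟨i, h0⟩ := h.injective.ne (by simp [Fin.ext_iff])
    have hne : ((h ⟨i+1, h1⟩ : Fin (n+1)) : ℕ) ≠ ((h ⟨i, h0⟩ : Fin (n+1)) : ℕ) :=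
      fun e => hab (Fin.ext e)
    have hAv := (h ⟨i, h0⟩).isLt
    have hBv := (h ⟨i+1, h1⟩).isLt
    simp only [pterm, h1, h0, dif_pos, hf, Equiv.Perm.mul_apply, Fin.lt_def, hmod,
      hwrap _ hAv, hwrap _ hBv]
    split_ifs <;> omega
  have hsum := Finset.sum_congr rfl hpt
  rw [Finset.sum_add_distrib, Finset.sum_add_distrib] at hsum
  rw [pmaj_eq, pmaj_eq]
  simp only [Nat.add_sub_cancel]
  -- Abel summation part
  have e1 : ∑ i ∈ Finset.range (n+1), i * f i
      = ∑ i ∈ Finset.range n, (i+1) * f (i+1) := by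
    rw [Finset.sum_range_succ' (fun i => i * f i) n]; simp
  have hfn : f n = 1 := by
    have : (⟨n, by omega⟩ : Fin (n+1)) = Fin.last n := rfl
    simp only [hf, dif_pos (by omega : n < n+1), this, hlast, Fin.val_last]
    rw [if_pos (by omega)]
  have e2 : ∑ i ∈ Finset.range (n+1), (i+1) * f i
      = (∑ i ∈ Finset.range n, (i+1) * f i) + (n+1) := by
    rw [Finset.sum_range_succ, hfn]; ring
  have e3 : ∑ i ∈ Finset.range (n+1), (i+1) * f i
      = (∑ i ∈ Finset.range (n+1), i * f i) + ∑ i ∈ Finset.range (n+1), f i := by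
    rw [← Finset.sum_add_distrib]
    exact Finset.sum_congr rfl fun i _ => by ring
  have hcount : ∑ i ∈ Finset.range (n+1), f i = j := by
    have hcast : ∑ i ∈ Finset.range (n+1), f i = ∑ i : Fin (n+1), f i.1 :=
      (Fin.sum_univ_eq_sum_range f (n+1)).symm
    have hg : ∀ i : Fin (n+1), f i.1 = (fun v : Fin (n+1) =>
        if n+1-j ≤ (v:ℕ) then 1 else 0) (h i) := by
      intro i; simp only [hf, dif_pos i.isLt]
    rw [hcast, Finset.sum_congr rfl (fun i _ => hg i),
      Equiv.sum_comp h (fun v : Fin (n+1) => if n+1-j ≤ (v:ℕ) then 1 else 0),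
      Fin.sum_univ_eq_sum_range (fun v => if n+1-j ≤ v then 1 else 0) (n+1),
      ind_sum _ _ (by omega)]
    omega
  omega

def extEquiv : Fin n ≃ {x : Fin (n+1) // (x:ℕ) < n} where
  toFun i := ⟨i.castSucc, i.isLt⟩
  invFun x := ⟨x.1.1, x.2⟩
  left_inv i := rfl
  right_inv x := rfl

def ext (σ : Perm (Fin n)) : Perm (Fin (n+1)) := σ.extendDomain extEquiv

lemma ext_mul (σ τ : Perm (Fin n)) : ext σ * ext τ = ext (σ * τ) :=
  Equiv.Perm.extendDomain_mul _ _ _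

lemma ext_inv (σ : Perm (Fin n)) : (ext σ)⁻¹ = ext σ⁻¹ :=
  Equiv.Perm.extendDomain_inv _ _

lemma ext_one : ext (1 : Perm (Fin n)) = 1 := Equiv.Perm.extendDomain_one _

lemma ext_apply_lt (σ : Perm (Fin n)) (x : Fin (n+1)) (hx : (x:ℕ) < n) :
    ext σ x = Fin.castSucc (σ ⟨x.1, hx⟩) :=
  Equiv.Perm.extendDomain_apply_subtype σ extEquiv hx

lemma ext_last (σ : Perm (Fin n)) : ext σ (Fin.last n) = Fin.last n :=
  Equiv.Perm.extendDomain_apply_not_subtype σ extEquiv (by simp)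

lemma ext_injective : Function.Injective (ext (n := n)) := by
  intro σ τ h
  ext i
  have h1 := congrArg (fun w : Perm (Fin (n+1)) => w i.castSucc) h
  simp only [ext_apply_lt _ _ (by simp [i.isLt] : ((i.castSucc : Fin (n+1)):ℕ) < n)] at h1
  have : σ ⟨i.1, i.isLt⟩ = τ ⟨i.1, i.isLt⟩ := Fin.castSucc_injective _ h1
  simpa using congrArg Fin.val this

lemma ext_eq_last_iff (σ : Perm (Fin n)) (x : Fin (n+1)) :
    ext σ x = Fin.last n ↔ x = Fin.last n := by
  constructor
  · intro hx
    by_contra hne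
    have hxlt : (x:ℕ) < n := by
      rcases Nat.lt_or_ge (x:ℕ) n with h | h
      · exact h
      · exact absurd (Fin.ext (by omega : (x:ℕ) = n)) hne
    rw [ext_apply_lt σ x hxlt] at hx
    exact absurd hx (Fin.ne_of_lt (Fin.castSucc_lt_last _))
  · rintro rfl; exact ext_last σ

lemma pmaj_ext (σ : Perm (Fin n)) : pmaj (ext σ) = pmaj σ := by
  rw [pmaj_eq, pmaj_eq]
  simp only [Nat.add_sub_cancel]
  cases n with
  | zero => simp
  | succ k =>
    rw [Finset.sum_range_succ]
    have hlastterm : pterm (ext σ) k = 0 := by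
      have hk1 : k + 1 < k + 2 := by omega
      have : (⟨k+1, hk1⟩ : Fin (k+2)) = Fin.last (k+1) := rfl
      simp only [pterm, dif_pos hk1, this, ext_last]
      rw [if_neg (by exact not_lt.mpr (Fin.le_last _))]
    rw [hlastterm, add_zero, Nat.add_sub_cancel]
    refine Finset.sum_congr rfl fun i hi => ?_
    simp only [Finset.mem_range] at hi
    have h2 : i + 1 < k + 2 := by omega
    have h1 : i + 1 < k + 1 := by omega
    simp only [pterm, dif_pos h2, dif_pos h1,
      ext_apply_lt σ ⟨i+1, h2⟩ (by simpa using h1),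
      ext_apply_lt σ ⟨i, Nat.lt_of_succ_lt h2⟩ (by simp; omega),
      Fin.castSucc_lt_castSucc_iff]

-- the two coset bijections
lemma card_eq : Fintype.card (Fin (n+1) × Perm (Fin n)) = Fintype.card (Perm (Fin (n+1))) := by
  simp [Fintype.card_perm, Nat.factorial_succ]

lemma card_eq' : Fintype.card (Perm (Fin n) × Fin (n+1)) = Fintype.card (Perm (Fin (n+1))) := by
  simp [Fintype.card_perm, Nat.factorial_succ, Nat.mul_comm]

def F (p : Fin (n+1) × Perm (Fin n)) : Perm (Fin (n+1)) :=
  (finRotate (n+1)) ^ (p.1 : ℕ) * ext p.2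

def F2 (p : Perm (Fin n) × Fin (n+1)) : Perm (Fin (n+1)) :=
  ext p.1 * (finRotate (n+1)) ^ (p.2 : ℕ)

lemma cpow_apply' (a : Fin (n+1)) (x : Fin (n+1)) :
    ((finRotate (n+1))^(a:ℕ)) x = x + a := by
  rw [cpow_apply, Fin.cast_val_eq_self]

lemma F_bij : Function.Bijective (F (n := n)) := by
  rw [Fintype.bijective_iff_injective_and_card]
  refine ⟨?_, card_eq⟩
  rintro ⟨i, τ⟩ ⟨i', τ'⟩ h
  have hl := congrArg (fun w : Perm (Fin (n+1)) => w (Fin.last n)) h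
  simp only [F, Equiv.Perm.mul_apply, ext_last, cpow_apply'] at hl
  have hii : i = i' := add_left_cancel hl
  subst hii
  have : ext τ = ext τ' := mul_left_cancel h
  exact Prod.ext rfl (ext_injective this)

lemma F2_bij : Function.Bijective (F2 (n := n)) := by
  rw [Fintype.bijective_iff_injective_and_card]
  refine ⟨?_, card_eq'⟩
  rintro ⟨τ, i⟩ ⟨τ', i'⟩ h
  have hl := congrArg (fun w : Perm (Fin (n+1)) => w (Fin.last n - i)) h
  simp only [F2, Equiv.Perm.mul_apply, cpow_apply', sub_add_cancel, ext_last] at hl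
  have h2 : Fin.last n - i + i' = Fin.last n := ((ext_eq_last_iff _ _).mp hl.symm)
  rw [sub_add_eq_add_sub, sub_eq_iff_eq_add] at h2
  have hii : i = i' := (add_left_cancel h2.symm)
  subst hii
  have : ext τ = ext τ' := mul_right_cancel h
  exact Prod.ext (ext_injective this) rfl

noncomputable section

def Mof {m : ℕ} (f : Perm (Fin m) → Polynomial ℚ) :
    Matrix (Perm (Fin m)) (Perm (Fin m)) (Polynomial ℚ) :=
  Matrix.of fun u v => f (u * v⁻¹)

lemma Mof_mul {m : ℕ} (f g : Perm (Fin m) → Polynomial ℚ) :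
    Mof f * Mof g = Mof (fun x => ∑ y : Perm (Fin m), f (x * y⁻¹) * g y) := by
  refine Matrix.ext fun u v => ?_
  rw [Matrix.mul_apply]
  exact (Fintype.sum_equiv (Equiv.mulRight v)
    (fun y => f (u * v⁻¹ * y⁻¹) * g y)
    (fun w => Mof f u w * Mof g w v)
    (fun y => by simp [Mof, mul_assoc, _root_.mul_inv_rev])).symm

def Xf (g : Perm (Fin (n+1))) : Polynomial ℚ :=
  if ∃ m : Fin (n+1), g = (finRotate (n+1))^(m:ℕ) then X^(pmaj g) else 0

def Bf (g : Perm (Fin (n+1))) : Polynomial ℚ :=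
  if g (Fin.last n) = Fin.last n then X^(pmaj g) else 0

lemma pmaj_cpow (j : ℕ) (hj1 : 1 ≤ j) (hjn : j ≤ n) :
    pmaj ((finRotate (n+1))^j) = n + 1 - j := by
  have := key_pmaj j hj1 hjn 1 rfl
  simpa [pmaj_one] using this

lemma pmaj_mul_ext (j : Fin (n+1)) (τ : Perm (Fin n)) :
    pmaj ((finRotate (n+1))^(j:ℕ) * ext τ) =
      pmaj ((finRotate (n+1))^(j:ℕ)) + pmaj (ext τ) := by
  rcases Nat.eq_zero_or_pos (j:ℕ) with hj | hj
  · simp [hj, pmaj_one]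
  · rw [key_pmaj (j:ℕ) hj (by omega : (j:ℕ) ≤ n) (ext τ) (ext_last τ),
      pmaj_cpow (j:ℕ) hj (by omega)]

lemma conv_eq (g : Perm (Fin (n+1))) :
    (∑ y : Perm (Fin (n+1)), Xf (g * y⁻¹) * Bf y) = X^(pmaj g) := by
  obtain ⟨⟨j, τ⟩, rfl⟩ := F_bij.surjective g
  rw [Fintype.sum_eq_single (ext τ)]
  · have h1 : F (j, τ) * (ext τ)⁻¹ = (finRotate (n+1))^(j:ℕ) := by
      rw [F, mul_inv_cancel_right]
    rw [h1, Xf, if_pos ⟨j, rfl⟩, Bf, if_pos (ext_last τ), ← pow_add]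
    congr 1
    rw [F, pmaj_mul_ext]
  · intro y hy
    rcases eq_or_ne (y (Fin.last n)) (Fin.last n) with hylast | hylast
    · have hno : ¬ ∃ m : Fin (n+1), F (j,τ) * y⁻¹ = (finRotate (n+1))^(m:ℕ) := by
        rintro ⟨m, hm⟩
        have hinv : y⁻¹ (Fin.last n) = Fin.last n :=
          Equiv.Perm.inv_eq_iff_eq.mpr hylast.symm
        have happ := congrArg (fun w : Perm (Fin (n+1)) => w (Fin.last n)) hm
        simp only [F, Equiv.Perm.mul_apply, hinv, ext_last, cpow_apply'] at happ
        have hjm : j = m := add_left_cancel happ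
        subst hjm
        rw [F, mul_assoc] at hm
        nth_rewrite 2 [← mul_one ((finRotate (n+1))^(j:ℕ))] at hm
        have h2 : ext τ * y⁻¹ = 1 := mul_left_cancel hm
        exact hy (mul_inv_eq_one.mp h2).symm
      rw [Xf, if_neg hno, zero_mul]
    · rw [Bf, if_neg hylast, mul_zero]

lemma A_factor :
    Mof (fun g : Perm (Fin (n+1)) => X^(pmaj g)) = Mof Xf * Mof Bf := by
  rw [Mof_mul]
  exact congrArg Mof (funext fun g => (conv_eq g).symm)


lemma cpow_inv_apply' (a : Fin (n+1)) (x : Fin (n+1)) :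
    (((finRotate (n+1))^(a:ℕ))⁻¹) x = x - a := by
  have := cpow_apply' a (x - a)
  rw [sub_add_cancel] at this
  conv_lhs => rw [← this, Equiv.Perm.inv_def, Equiv.symm_apply_apply]

lemma B_entry (p p' : Perm (Fin n) × Fin (n+1)) :
    Bf (F2 p * (F2 p')⁻¹) =
      if p.2 = p'.2 then X^(pmaj (p.1 * p'.1⁻¹)) else 0 := by
  obtain ⟨τ, i⟩ := p
  obtain ⟨σ, j⟩ := p'
  simp only [F2, _root_.mul_inv_rev]
  rcases eq_or_ne i j with rfl | hij
  · rw [if_pos rfl]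
    have hgrp : ext τ * (finRotate (n+1))^(i:ℕ) *
        (((finRotate (n+1))^(i:ℕ))⁻¹ * (ext σ)⁻¹) = ext (τ * σ⁻¹) := by
      rw [mul_assoc (ext τ), ← mul_assoc ((finRotate (n+1))^(i:ℕ)),
        mul_inv_cancel, one_mul, ext_inv, ext_mul]
    rw [hgrp, Bf, if_pos (ext_last _), pmaj_ext]
  · rw [if_neg hij, Bf, if_neg ?_]
    intro hcon
    simp only [Equiv.Perm.mul_apply, ext_inv, ext_last, cpow_inv_apply',
      cpow_apply'] at hcon
    rw [ext_eq_last_iff] at hcon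
    rw [sub_add_eq_add_sub, sub_eq_iff_eq_add] at hcon
    exact hij (add_left_cancel hcon.symm).symm

lemma det_B : (Mof (Bf (n := n))).det =
    (Mof (fun g : Perm (Fin n) => X^(pmaj g))).det ^ (n+1) := by
  rw [← Matrix.det_submatrix_equiv_self (Equiv.ofBijective F2 F2_bij) (Mof Bf)]
  have hbd : (Mof Bf).submatrix (Equiv.ofBijective F2 F2_bij) (Equiv.ofBijective F2 F2_bij)
      = Matrix.blockDiagonal (fun _ : Fin (n+1) =>
          Mof (fun g : Perm (Fin n) => X^(pmaj g))) := by
    refine Matrix.ext fun p p' => ?_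
    rw [Matrix.submatrix_apply]
    have : (Mof Bf) (Equiv.ofBijective F2 F2_bij p) (Equiv.ofBijective F2 F2_bij p')
        = Bf (F2 p * (F2 p')⁻¹) := rfl
    rw [this, B_entry]
    obtain ⟨τ, i⟩ := p
    obtain ⟨σ, j⟩ := p'
    rw [Matrix.blockDiagonal_apply]
    rfl
  rw [hbd, Matrix.det_blockDiagonal, Finset.prod_const, Finset.card_univ, Fintype.card_fin]


def xc (d : Fin (n+1)) : Polynomial ℚ := X^(pmaj ((finRotate (n+1))^(d:ℕ)))

def Cmat : Matrix (Fin (n+1)) (Fin (n+1)) (Polynomial ℚ) :=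
  Matrix.of fun i j => xc (i - j)

lemma X_entry (p p' : Fin (n+1) × Perm (Fin n)) :
    Xf (F p * (F p')⁻¹) =
      if p.2 = p'.2 then xc (p.1 - p'.1) else 0 := by
  obtain ⟨i, τ⟩ := p
  obtain ⟨j, σ⟩ := p'
  simp only [F, _root_.mul_inv_rev]
  rcases eq_or_ne τ σ with rfl | hts
  · rw [if_pos rfl]
    have hgrp : (finRotate (n+1))^(i:ℕ) * ext τ *
        ((ext τ)⁻¹ * ((finRotate (n+1))^(j:ℕ))⁻¹) =
          (finRotate (n+1))^(((i - j : Fin (n+1))):ℕ) := by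
      rw [mul_assoc ((finRotate (n+1))^(i:ℕ)), ← mul_assoc (ext τ),
        mul_inv_cancel, one_mul]
      refine Equiv.ext fun x => ?_
      simp only [Equiv.Perm.mul_apply, cpow_inv_apply', cpow_apply']
      rw [sub_add_eq_add_sub, add_sub_assoc]
    rw [hgrp, Xf, if_pos ⟨i - j, rfl⟩]
    rfl
  · rw [if_neg hts, Xf, if_neg ?_]
    rintro ⟨m, hm⟩
    have hgrp : (finRotate (n+1))^(i:ℕ) * ext τ *
        ((ext σ)⁻¹ * ((finRotate (n+1))^(j:ℕ))⁻¹)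
        = (finRotate (n+1))^(i:ℕ) * ext (τ * σ⁻¹) * ((finRotate (n+1))^(j:ℕ))⁻¹ := by
      rw [ext_inv, ← ext_mul]
      simp [mul_assoc]
    rw [hgrp] at hm
    have h2 := congrArg (fun w : Perm (Fin (n+1)) =>
      ((finRotate (n+1))^(i:ℕ))⁻¹ * w * (finRotate (n+1))^(j:ℕ)) hm
    simp only [mul_assoc, inv_mul_cancel_left, inv_mul_cancel, mul_one] at h2
    -- h2 : ext (τ * σ⁻¹) = ((finRotate (n+1))^(i:ℕ))⁻¹ * ((finRotate (n+1))^(m:ℕ) * (finRotate (n+1))^(j:ℕ))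
    have hlast := congrArg (fun w : Perm (Fin (n+1)) => w (Fin.last n)) h2
    simp only [Equiv.Perm.mul_apply, ext_last, cpow_apply', cpow_inv_apply'] at hlast
    have hx : ∀ x : Fin (n+1), ext (τ * σ⁻¹) x = x := by
      intro x
      rw [h2]
      simp only [Equiv.Perm.mul_apply, cpow_apply', cpow_inv_apply']
      have : Fin.last n + j + m - i = Fin.last n + (j + m - i) := by ring
      rw [this] at hlast
      have hz : j + m - i = 0 := by
        have h3 : Fin.last n + (j + m - i) = Fin.last n + 0 := by
          rw [add_zero, ← hlast]
        exact add_left_cancel h3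
      have : x + j + m - i = x + (j + m - i) := by ring
      rw [this, hz, add_zero]
    have : ext (τ * σ⁻¹) = 1 := Equiv.ext hx
    rw [← ext_one] at this
    have := ext_injective this
    exact hts (by rwa [mul_inv_eq_one] at this)

lemma det_X : (Mof (Xf (n := n))).det = (Cmat (n := n)).det ^ (n.factorial) := by
  rw [← Matrix.det_submatrix_equiv_self (Equiv.ofBijective F F_bij) (Mof Xf)]
  have hbd : (Mof Xf).submatrix (Equiv.ofBijective F F_bij) (Equiv.ofBijective F F_bij)
      = Matrix.blockDiagonal (fun _ : Perm (Fin n) => Cmat) := by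
    refine Matrix.ext fun p p' => ?_
    rw [Matrix.submatrix_apply]
    have : (Mof Xf) (Equiv.ofBijective F F_bij p) (Equiv.ofBijective F F_bij p')
        = Xf (F p * (F p')⁻¹) := rfl
    rw [this, X_entry]
    obtain ⟨i, τ⟩ := p
    obtain ⟨j, σ⟩ := p'
    rw [Matrix.blockDiagonal_apply]
    rfl
  rw [hbd, Matrix.det_blockDiagonal, Finset.prod_const, Finset.card_univ, Fintype.card_perm,
    Fintype.card_fin]


lemma xc_zero : xc (0 : Fin (n+1)) = 1 := by
  simp [xc, pmaj_one]

lemma xc_pos (d : Fin (n+1)) (hd : (d:ℕ) ≠ 0) : xc d = X^(n + 1 - (d:ℕ)) := by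
  rw [xc, pmaj_cpow (d:ℕ) (by omega) (by have := d.isLt; omega)]

def Lmat : Matrix (Fin (n+1)) (Fin (n+1)) (Polynomial ℚ) :=
  Matrix.of fun i k => if i = k then 1 else if (k:ℕ) = (i:ℕ)+1 then (-X) else 0

def Mmat : Matrix (Fin (n+1)) (Fin (n+1)) (Polynomial ℚ) :=
  Matrix.of fun i j => if (i:ℕ) < n then (if i = j then 1 - X^(n+1) else 0) else xc (i - j)

lemma det_Lmat : (Lmat (n := n)).det = 1 := by
  rw [Matrix.det_of_upperTriangular (M := Lmat)]
  · exact Finset.prod_eq_one fun i _ => if_pos rfl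
  · intro i j hij
    have h1 : ¬ (i = j) := fun e => absurd e.symm (ne_of_lt hij)
    have h2 : ¬ ((j:ℕ) = (i:ℕ)+1) := by
      have : (j:ℕ) < (i:ℕ) := hij
      omega
    simp only [Lmat, Matrix.of_apply, if_neg h1, if_neg h2]

lemma det_Mmat : (Mmat (n := n)).det = (1 - X^(n+1))^n := by
  rw [Matrix.det_of_lowerTriangular (M := Mmat)]
  · rw [Fin.prod_univ_castSucc]
    have h1 : ∀ i : Fin n, Mmat (n := n) i.castSucc i.castSucc = 1 - X^(n+1) := by
      intro i
      simp only [Mmat, Matrix.of_apply]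
      rw [if_pos (by simpa using i.isLt)]
      simp
    have h2 : Mmat (n := n) (Fin.last n) (Fin.last n) = 1 := by
      simp only [Mmat, Matrix.of_apply]
      rw [if_neg (by simp), sub_self, xc_zero]
    rw [h2, mul_one, Finset.prod_congr rfl (fun i _ => h1 i), Finset.prod_const,
      Finset.card_univ, Fintype.card_fin]
  · intro i j hij
    have hij2 : i < j := hij
    have hij' : (i:ℕ) < (j:ℕ) := hij2
    simp only [Mmat, Matrix.of_apply]
    have h1 : (i:ℕ) < n := by have := j.isLt; omega
    rw [if_pos h1, if_neg (fun e => by rw [e] at hij'; omega)]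

lemma key_xc (d : Fin (n+1)) : xc d - X * xc (d+1) =
    if d = 0 then 1 - X^(n+1) else 0 := by
  rcases eq_or_ne d 0 with rfl | hd0
  · rw [if_pos rfl, xc_zero, zero_add]
    rcases Nat.eq_zero_or_pos n with hn | hn
    · subst hn
      have : (1 : Fin 1) = 0 := rfl
      rw [this, xc_zero, mul_one, pow_one]
    · have h1 : ((1 : Fin (n+1)) : ℕ) = 1 := by
        rw [Fin.val_one', Nat.mod_eq_of_lt (by omega : 1 < n+1)]
      rw [xc_pos 1 (by rw [h1]; omega), h1, show n + 1 - 1 = n from by omega, ← pow_succ']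
  · rw [if_neg hd0]
    have hdv : (d:ℕ) ≠ 0 := fun e => hd0 (Fin.ext e)
    rcases eq_or_ne (d:ℕ) n with hdn | hdn
    · have hlast : d = Fin.last n := Fin.ext hdn
      have hn1 : 1 ≤ n := by omega
      have : d + 1 = 0 := by
        apply Fin.ext
        rw [Fin.val_add, Fin.val_one', Fin.val_zero, hdn,
          Nat.mod_eq_of_lt (by omega : 1 < n+1), Nat.mod_self]
      rw [this, xc_zero, mul_one, xc_pos d hdv, hdn,
        show n + 1 - n = 1 from by omega, pow_one, sub_self]
    · have hdlt : (d:ℕ) < n := by have := d.isLt; omega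
      have hval : ((d + 1 : Fin (n+1)) : ℕ) = (d:ℕ) + 1 := by
        rw [Fin.val_add, Fin.val_one', Nat.mod_eq_of_lt (show 1 < n+1 by omega),
          Nat.mod_eq_of_lt (by omega)]
      rw [xc_pos d hdv, xc_pos (d+1) (by omega), hval, ← pow_succ']
      rw [show (n + 1 - ((d:ℕ)+1)) + 1 = n + 1 - (d:ℕ) by omega, sub_self]

lemma L_mul_C : (Lmat (n := n)) * Cmat = Mmat := by
  refine Matrix.ext fun i j => ?_
  rw [Matrix.mul_apply]
  have hL : ∀ k : Fin (n+1), Lmat (n := n) i k =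
      (if i = k then (1 : Polynomial ℚ) else 0) + (if (k:ℕ) = (i:ℕ)+1 then (-X) else 0) := by
    intro k
    simp only [Lmat, Matrix.of_apply]
    split_ifs with h1 h2
    · exfalso; rw [← h1] at h2; omega
    · rw [add_zero]
    · rw [zero_add]
    · rw [add_zero]
  have hsplit : ∑ k : Fin (n+1), Lmat (n := n) i k * Cmat k j
      = (∑ k : Fin (n+1), (if i = k then (1:Polynomial ℚ) else 0) * Cmat k j)
        + ∑ k : Fin (n+1), (if (k:ℕ) = (i:ℕ)+1 then (-X) else 0) * Cmat k j := by
    rw [← Finset.sum_add_distrib]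
    exact Finset.sum_congr rfl fun k _ => by rw [hL k, add_mul]
  rw [hsplit]
  have hfirst : (∑ k : Fin (n+1), (if i = k then (1:Polynomial ℚ) else 0) * Cmat k j) = Cmat i j := by
    rw [Finset.sum_congr rfl (fun k _ => by rw [ite_mul, one_mul, zero_mul]),
      Finset.sum_ite_eq Finset.univ i (fun k => Cmat (n := n) k j)]
    simp
  rw [hfirst]
  rcases Nat.lt_or_ge (i:ℕ) n with hlt | hge
  · -- second sum = -X * Cmat (i+1) j
    have hval : ((i + 1 : Fin (n+1)) : ℕ) = (i:ℕ) + 1 := by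
      rw [Fin.val_add, Fin.val_one', Nat.mod_eq_of_lt (show 1 < n+1 by omega),
        Nat.mod_eq_of_lt (by omega)]
    have hsec : (∑ k : Fin (n+1), (if (k:ℕ) = (i:ℕ)+1 then (-X : Polynomial ℚ) else 0) * Cmat k j)
        = (-X) * Cmat (i+1) j := by
      have hcond : ∀ k : Fin (n+1), ((k:ℕ) = (i:ℕ)+1) ↔ k = i + 1 := by
        intro k
        rw [Fin.ext_iff, hval]
      rw [Finset.sum_congr rfl (fun k _ => by rw [if_congr (hcond k) rfl rfl, ite_mul, zero_mul]),
        Finset.sum_ite_eq' Finset.univ (i+1) (fun k => (-X) * Cmat (n := n) k j)]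
      simp
    rw [hsec]
    simp only [Cmat, Mmat, Matrix.of_apply, if_pos hlt]
    have harith : (i + 1 : Fin (n+1)) - j = (i - j) + 1 := by ring
    rw [harith, neg_mul, ← sub_eq_add_neg]
    rw [key_xc (i - j)]
    exact if_congr sub_eq_zero rfl rfl
  · -- i = last : second sum = 0
    have hsec : (∑ k : Fin (n+1), (if (k:ℕ) = (i:ℕ)+1 then (-X : Polynomial ℚ) else 0) * Cmat k j) = 0 := by
      refine Finset.sum_eq_zero fun k _ => ?_
      rw [if_neg (by have := k.isLt; omega), zero_mul]
    rw [hsec, add_zero]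
    simp only [Cmat, Mmat, Matrix.of_apply]
    rw [if_neg (by omega)]

lemma det_Cmat : (Cmat (n := n)).det = (1 - X^(n+1))^n := by
  have h := congrArg Matrix.det (L_mul_C (n := n))
  rw [Matrix.det_mul, det_Lmat, one_mul, det_Mmat] at h
  exact h


lemma step : (Mof (fun g : Perm (Fin (n+1)) => X^(pmaj g))).det
    = (1 - X^(n+1))^(n * n.factorial)
      * (Mof (fun g : Perm (Fin n) => X^(pmaj g))).det^(n+1) := by
  rw [A_factor, Matrix.det_mul, det_X, det_Cmat, det_B, ← pow_mul]

lemma main : ∀ m : ℕ, (Mof (fun g : Perm (Fin m) => X^(pmaj g))).det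
    = ∏ k ∈ Finset.Icc 2 m, (1 - (X : Polynomial ℚ)^k)^(m.factorial * (k-1) / k) := by
  intro m
  induction m with
  | zero =>
    have hsub : Subsingleton (Perm (Fin 0)) := ⟨fun a b => Equiv.ext fun x => x.elim0⟩
    have hone : (Mof (fun g : Perm (Fin 0) => X^(pmaj g))) = 1 := by
      refine Matrix.ext fun u v => ?_
      have huv : u = v := hsub.elim u v
      subst huv
      have : u * u⁻¹ = 1 := mul_inv_cancel u
      show X ^ (pmaj (u * u⁻¹)) = _
      rw [this, pmaj_one, pow_zero, Matrix.one_apply_eq]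
    rw [hone, Matrix.det_one]
    simp
  | succ m ih =>
    rw [step, ih]
    rcases Nat.eq_zero_or_pos m with rfl | hm
    · simp
    · rw [Finset.prod_Icc_succ_top (by omega : 2 ≤ m + 1)]
      have hlastexp : (m+1).factorial * (m + 1 - 1) / (m + 1) = m * m.factorial := by
        rw [Nat.factorial_succ]
        rw [show m + 1 - 1 = m from by omega]
        rw [Nat.mul_assoc, Nat.mul_div_cancel_left _ (by omega : 0 < m + 1)]
        ring
      rw [hlastexp]
      have hexp : ∀ k ∈ Finset.Icc 2 m,
          (((1 : Polynomial ℚ) - X^k)^(m.factorial * (k-1) / k)) ^ (m+1)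
            = (1 - X^k)^((m+1).factorial * (k-1) / k) := by
        intro k hk
        simp only [Finset.mem_Icc] at hk
        rw [← pow_mul]
        congr 1
        have hdvd : k ∣ m.factorial * (k - 1) :=
          Dvd.dvd.mul_right (Nat.dvd_factorial (by omega) hk.2) _
        rw [Nat.factorial_succ, Nat.mul_assoc, Nat.mul_div_assoc _ hdvd]
        ring
      rw [← Finset.prod_pow, Finset.prod_congr rfl hexp]
      ring

end
end S10


/-- Theorem 56 of Krattenthaler / Thibon: for all `n ≥ 1`,
`det( q^{maj(u v⁻¹)} )_{u,v ∈ Sₙ} = ∏_{k=2}^n (1 - q^k)^{n!(k-1)/k}`. -/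
theorem stmt10 (n : ℕ) (hn : 1 ≤ n) :
    Matrix.det (Matrix.of fun u v : Equiv.Perm (Fin n) =>
        (Polynomial.X : Polynomial ℚ) ^ pmaj (u * v⁻¹)) =
      ∏ k ∈ Finset.Icc 2 n,
        (1 - (Polynomial.X : Polynomial ℚ) ^ k) ^ (n.factorial * (k - 1) / k) := by
  exact S10.main n
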